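/- A recurrence matrix need not be invertible within Rec: the diagonal element A ∈ K^{M_{p×p}} defined by A[U,W] = 1 + n if U = W is a word of length n and A[U,W] = 0 otherwise is a recurrence matrix (its recursive closure is 2-dimensional, spanned by A and the diagonal all-ones function), it is invertible in K^{M_{p×p}} for the matrix product when char(K) = 0 (each finite matrix A[M^l] is diagonal with nonzero entries 1+l), but its matrix-product inverse, the diagonal function with entries 1/(1+n), has infinite-dimensional recursive closure when p ≥ 2, hence is not a recurrence matrix. -/

import Mathlib

/-- The free monoid `M_{p×q}` of pairs of equal-length words. -/
def EqPair (p q : ℕ) : Type :=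
  {x : List (Fin p) × List (Fin q) // x.1.length = x.2.length}

/-- The single-letter shift operator `ρ(s,t)`: `(ρ(s,t)A)[U,W] = A[Us,Wt]`. -/
def shiftL (p q : ℕ) (K : Type*) [Field K] (s : Fin p) (t : Fin q) :
    (EqPair p q → K) →ₗ[K] (EqPair p q → K) where
  toFun A := fun x => A ⟨(x.1.1 ++ [s], x.1.2 ++ [t]), by simp [x.2]⟩
  map_add' _ _ := rfl
  map_smul' _ _ := rfl

/-- A subspace of `K^{M_{p×q}}` is recursively closed if it is stable under
all shift operators. -/
def RecClosed (p q : ℕ) (K : Type*) [Field K]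
    (V : Submodule K (EqPair p q → K)) : Prop :=
  ∀ (s : Fin p) (t : Fin q), ∀ A ∈ V, shiftL p q K s t A ∈ V

/-- The recursive closure of `A`: the smallest recursively closed subspace
containing `A`. -/
def recClosure (p q : ℕ) (K : Type*) [Field K] (A : EqPair p q → K) :
    Submodule K (EqPair p q → K) :=
  sInf {V | A ∈ V ∧ RecClosed p q K V}

/-- `A` is a recurrence matrix if its recursive closure is
finite-dimensional. -/
def IsRecMatrix (p q : ℕ) (K : Type*) [Field K] (A : EqPair p q → K) : Prop :=
  FiniteDimensional K (recClosure p q K A)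

/-- The matrix product `(A·B)[U,W] = ∑_V A[U,V] B[V,W]`. -/
def matMul {p r q : ℕ} {K : Type*} [Field K]
    (A : EqPair p r → K) (B : EqPair r q → K) : EqPair p q → K :=
  fun x => ∑ V : Fin x.1.1.length → Fin r,
    A ⟨(x.1.1, List.ofFn V), by simp⟩ * B ⟨(List.ofFn V, x.1.2), by simp [x.2]⟩

/-- The identity for the matrix product: the Kronecker delta on word pairs. -/
def deltaFun (p : ℕ) (K : Type*) [Field K] : EqPair p p → K :=
  fun x => if x.1.1 = x.1.2 then 1 else 0

/-- The diagonal recurrence matrix `A[U,U] = 1 + l(U)`, `A[U,W] = 0` for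
`U ≠ W`. -/
def diagA (p : ℕ) (K : Type*) [Field K] : EqPair p p → K :=
  fun x => if x.1.1 = x.1.2 then (1 + x.1.1.length : K) else 0

-- auxiliary development
set_option linter.unusedSectionVars false


section Aux
variable {p : ℕ} {K : Type*} [Field K]

lemma mem_recClosure_self (A : EqPair p p → K) : A ∈ recClosure p p K A :=
  Submodule.mem_sInf.2 fun _ hV => hV.1

lemma recClosed_recClosure (A : EqPair p p → K) :
    RecClosed p p K (recClosure p p K A) := fun s t B hB =>
  Submodule.mem_sInf.2 fun V hV => hV.2 s t B (Submodule.mem_sInf.1 hB V hV)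

lemma recClosure_le {A : EqPair p p → K} {V : Submodule K (EqPair p p → K)}
    (h1 : A ∈ V) (h2 : RecClosed p p K V) : recClosure p p K A ≤ V :=
  sInf_le ⟨h1, h2⟩

/-- generic diagonal function -/
def diagF (p : ℕ) (K : Type*) [Field K] (f : ℕ → K) : EqPair p p → K :=
  fun x => if x.1.1 = x.1.2 then f x.1.1.length else 0

lemma shiftL_diagF (f : ℕ → K) (s t : Fin p) :
    shiftL p p K s t (diagF p K f) =
      if s = t then diagF p K (fun n => f (n + 1)) else 0 := by
  funext x
  obtain ⟨⟨U, W⟩, h⟩ := x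
  simp only [shiftL, diagF, LinearMap.coe_mk, AddHom.coe_mk]
  by_cases hst : s = t
  · subst hst
    simp [diagF, List.append_left_inj]
  · have : ¬ (U ++ [s] = W ++ [t]) := by
      intro hc
      have := (List.append_inj' hc (by simp)).2
      simp at this; exact hst this
    simp [this, hst]; rfl

lemma diagF_mul (f g : ℕ → K) :
    matMul (diagF p K f) (diagF p K g) = diagF p K (fun n => f n * g n) := by
  funext x
  obtain ⟨⟨U, W⟩, h⟩ := x
  simp only [matMul, diagF]
  rw [Fintype.sum_eq_single (fun i => U.get i)]
  · simp only [List.ofFn_get, if_pos rfl, List.length_ofFn]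
    by_cases hUW : U = W
    · simp [hUW, mul_ite]
    · simp [hUW]
  · intro V hV
    have : ¬ (U = List.ofFn V) := by
      intro hc
      apply hV
      have : List.ofFn (fun i => U.get i) = List.ofFn V := by
        rw [List.ofFn_get]; exact hc
      exact (List.ofFn_inj.1 this).symm ▸ rfl
    simp [this]

end Aux

section LI
variable {K : Type*} [Field K] [CharZero K]

variable {K : Type*} [Field K] [CharZero K]

lemma one_add_cast_ne (k n : ℕ) : (1 + (k:K) + n) ≠ 0 := by
  have h : ((1 + k + n : ℕ) : K) ≠ 0 := Nat.cast_ne_zero.2 (by omega)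
  push_cast at h
  exact h

lemma inv_li : LinearIndependent K
    (fun k : ℕ => (fun n : ℕ => (1 + (k:K) + n)⁻¹ : ℕ → K)) := by
  rw [linearIndependent_iff']
  intro s g hg i hi
  set P : Polynomial K := ∑ k ∈ s, Polynomial.C (g k) *
      ∏ j ∈ s.erase k, (Polynomial.X + Polynomial.C (1 + (j:K))) with hPdef
  have hroot : ∀ n : ℕ, P.eval (n:K) = 0 := by
    intro n
    have hsum : ∑ k ∈ s, g k * (1 + (k:K) + n)⁻¹ = 0 := by
      have := congrFun hg n
      simpa using this
    have key : P.eval (n:K) =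
        (∑ k ∈ s, g k * (1 + (k:K) + n)⁻¹) * ∏ j ∈ s, ((n:K) + (1 + j)) := by
      rw [Finset.sum_mul]
      simp only [hPdef, Polynomial.eval_finset_sum, Polynomial.eval_mul, Polynomial.eval_C,
        Polynomial.eval_prod, Polynomial.eval_add, Polynomial.eval_X]
      refine Finset.sum_congr rfl fun k hk => ?_
      have h2 : ∏ j ∈ s, ((n:K) + (1 + j)) =
          ((n:K) + (1 + k)) * ∏ j ∈ s.erase k, ((n:K) + (1 + j)) :=
        (Finset.mul_prod_erase _ _ hk).symm
      rw [h2]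
      have h3 : (1 + (k:K) + n)⁻¹ * ((n:K) + (1 + k)) = 1 := by
        rw [show ((n:K) + (1 + k)) = (1 + (k:K) + n) by ring]
        exact inv_mul_cancel₀ (one_add_cast_ne k n)
      calc g k * ∏ j ∈ s.erase k, ((n:K) + (1 + j))
          = g k * ((1 + (k:K) + n)⁻¹ * ((n:K) + (1 + k))) *
              ∏ j ∈ s.erase k, ((n:K) + (1 + j)) := by rw [h3, mul_one]
        _ = g k * (1 + (k:K) + n)⁻¹ *
              (((n:K) + (1 + k)) * ∏ j ∈ s.erase k, ((n:K) + (1 + j))) := by ring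
    rw [key, hsum, zero_mul]
  have hP : P = 0 := by
    refine Polynomial.eq_zero_of_infinite_isRoot P ?_
    exact Set.infinite_of_injective_forall_mem
      (f := fun n : ℕ => (n : K)) Nat.cast_injective (fun n => hroot n)
  have hev := congrArg (Polynomial.eval (-(1 + (i:K)))) hP
  simp only [hPdef, Polynomial.eval_finset_sum, Polynomial.eval_mul, Polynomial.eval_C,
    Polynomial.eval_prod, Polynomial.eval_add, Polynomial.eval_X, Polynomial.eval_zero] at hev
  rw [Finset.sum_eq_single i] at hev
  · have hprod : ∏ j ∈ s.erase i, (-(1 + (i:K)) + (1 + j)) ≠ 0 := by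
      rw [Finset.prod_ne_zero_iff]
      intro j hj
      have hji : j ≠ i := (Finset.mem_erase.1 hj).1
      have : (-(1 + (i:K)) + (1 + j)) = (j:K) - i := by ring
      rw [this]
      exact sub_ne_zero.2 (fun hc => hji (Nat.cast_injective hc))
    exact (mul_eq_zero.1 hev).resolve_right hprod
  · intro k hk hki
    apply mul_eq_zero_of_right
    refine Finset.prod_eq_zero (Finset.mem_erase.2 ⟨hki.symm, hi⟩) ?_
    ring
  · intro h; exact absurd hi h

end LI

section Main
variable (p : ℕ) (K : Type*) [Field K] [CharZero K]

lemma diagA_eq : diagA p K = diagF p K (fun n => 1 + (n:K)) := rfl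

lemma deltaFun_eq : deltaFun p K = diagF p K (fun _ => (1:K)) := rfl

lemma shiftL_diagA (s t : Fin p) :
    shiftL p p K s t (diagA p K) =
      if s = t then diagA p K + deltaFun p K else 0 := by
  rw [diagA_eq, shiftL_diagF]
  by_cases hst : s = t
  · subst hst
    rw [if_pos rfl, if_pos rfl]
    funext x
    rw [Pi.add_apply]
    obtain ⟨⟨U, W⟩, h⟩ := x
    by_cases hUW : U = W <;> simp [diagF, diagA, deltaFun, hUW] <;> push_cast <;> ring
  · simp [hst]

lemma shiftL_deltaFun (s t : Fin p) :
    shiftL p p K s t (deltaFun p K) =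
      if s = t then deltaFun p K else 0 := by
  rw [deltaFun_eq, shiftL_diagF]

/-- the span of diagA and deltaFun -/
noncomputable def spanAD : Submodule K (EqPair p p → K) :=
  Submodule.span K (Set.range ![diagA p K, deltaFun p K])

lemma diagA_mem_spanAD : diagA p K ∈ spanAD p K :=
  Submodule.subset_span ⟨0, rfl⟩

lemma deltaFun_mem_spanAD : deltaFun p K ∈ spanAD p K :=
  Submodule.subset_span ⟨1, rfl⟩

lemma recClosed_spanAD : RecClosed p p K (spanAD p K) := by
  intro s t A hA
  have : spanAD p K ≤ Submodule.comap (shiftL p p K s t) (spanAD p K) := by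
    refine Submodule.span_le.2 ?_
    rintro x ⟨i, rfl⟩
    fin_cases i
    · show shiftL p p K s t (diagA p K) ∈ spanAD p K
      rw [shiftL_diagA]
      split
      · exact (spanAD p K).add_mem (diagA_mem_spanAD p K) (deltaFun_mem_spanAD p K)
      · exact (spanAD p K).zero_mem
    · show shiftL p p K s t (deltaFun p K) ∈ spanAD p K
      rw [shiftL_deltaFun]
      split
      · exact deltaFun_mem_spanAD p K
      · exact (spanAD p K).zero_mem
  exact this hA

lemma recClosure_diagA_eq (hp : 0 < p) :
    recClosure p p K (diagA p K) = spanAD p K := by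
  refine le_antisymm (recClosure_le (diagA_mem_spanAD p K) (recClosed_spanAD p K)) ?_
  refine Submodule.span_le.2 ?_
  rintro x ⟨i, rfl⟩
  fin_cases i
  · exact mem_recClosure_self _
  · show deltaFun p K ∈ recClosure p p K (diagA p K)
    have t0 : Fin p := ⟨0, hp⟩
    have h1 : shiftL p p K t0 t0 (diagA p K) ∈ recClosure p p K (diagA p K) :=
      recClosed_recClosure _ t0 t0 _ (mem_recClosure_self _)
    rw [shiftL_diagA, if_pos rfl] at h1
    have := (recClosure p p K (diagA p K)).sub_mem h1 (mem_recClosure_self _)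
    simpa using this

lemma li_AD (hp : 0 < p) : LinearIndependent K ![diagA p K, deltaFun p K] := by
  rw [LinearIndependent.pair_iff]
  intro a b hab
  have h1 := congrFun hab (⟨(([] : List (Fin p)), ([] : List (Fin p))), rfl⟩ : EqPair p p)
  have h2 := congrFun hab (⟨(([⟨0, hp⟩] : List (Fin p)), ([⟨0, hp⟩] : List (Fin p))), rfl⟩ : EqPair p p)
  change a * diagA p K _ + b * deltaFun p K _ = 0 at h1 h2
  simp [diagA, deltaFun] at h1 h2
  constructor
  · linear_combination h2 - h1
  · linear_combination 2 * h1 - h2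

/-- the diagonal functions `B_k[U,U] = (1+k+l(U))⁻¹`. -/
noncomputable def diagB (k : ℕ) : EqPair p p → K :=
  diagF p K (fun n => (1 + (k:K) + n)⁻¹)

lemma diagB_zero :
    diagB p K 0 =
      (fun x : EqPair p p => if x.1.1 = x.1.2 then ((1 + x.1.1.length : K))⁻¹ else 0) := by
  funext x
  simp [diagB, diagF]

lemma diagB_mem (hp : 0 < p) (k : ℕ) :
    diagB p K k ∈ recClosure p p K
      (fun x : EqPair p p => if x.1.1 = x.1.2 then ((1 + x.1.1.length : K))⁻¹ else 0) := by
  induction k with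
  | zero => rw [diagB_zero]; exact mem_recClosure_self _
  | succ k ih =>
    have h1 := recClosed_recClosure
      (fun x : EqPair p p => if x.1.1 = x.1.2 then ((1 + x.1.1.length : K))⁻¹ else 0)
      ⟨0, hp⟩ ⟨0, hp⟩ _ ih
    rw [show diagB p K k = diagF p K (fun n => (1 + (k:K) + n)⁻¹) from rfl,
      shiftL_diagF, if_pos rfl] at h1
    have hfe : (fun n : ℕ => (1 + ((k + 1 : ℕ) : K) + n)⁻¹) =
        (fun n : ℕ => (1 + (k:K) + ((n + 1 : ℕ) : K))⁻¹) := by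
      funext n; push_cast; ring_nf
    show diagF p K (fun n : ℕ => (1 + ((k + 1 : ℕ) : K) + n)⁻¹) ∈ _
    rw [hfe]
    exact h1

/-- evaluation along the diagonal of words `0^n`. -/
noncomputable def evalDiag (hp : 0 < p) : (EqPair p p → K) →ₗ[K] (ℕ → K) where
  toFun A := fun n => A ⟨(List.replicate n ⟨0, hp⟩, List.replicate n ⟨0, hp⟩), by simp⟩
  map_add' _ _ := rfl
  map_smul' _ _ := rfl

lemma li_diagB (hp : 0 < p) : LinearIndependent K (fun k : ℕ => diagB p K k) := by
  have hcomp : (⇑(evalDiag p K hp)) ∘ (fun k : ℕ => diagB p K k) =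
      (fun k : ℕ => (fun n : ℕ => (1 + (k:K) + n)⁻¹)) := by
    funext k n
    simp [evalDiag, diagB, diagF]
  exact LinearIndependent.of_comp (evalDiag p K hp) (by rw [hcomp]; exact inv_li)

end Main


/-- A recurrence matrix invertible in `K^{M_{p×p}}` need not be invertible in
`Rec`: over a field of characteristic `0` and for `p ≥ 2`, the diagonal
function `A[U,U] = 1 + l(U)` is a recurrence matrix, its matrix-product
inverse is the diagonal function `B[U,U] = (1 + l(U))⁻¹`, but `B` is not a
recurrence matrix. -/
theorem recMatrix_inverse_not_rec (p : ℕ) (hp : 2 ≤ p)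
    (K : Type*) [Field K] [CharZero K] :
    IsRecMatrix p p K (diagA p K) ∧
    Module.finrank K (recClosure p p K (diagA p K)) = 2 ∧
    (matMul (diagA p K)
        (fun x => if x.1.1 = x.1.2 then ((1 + x.1.1.length : K))⁻¹ else 0) =
      deltaFun p K) ∧
    (matMul (fun x => if x.1.1 = x.1.2 then ((1 + x.1.1.length : K))⁻¹ else 0)
        (diagA p K) =
      deltaFun p K) ∧
    ¬ IsRecMatrix p p K
        (fun x => if x.1.1 = x.1.2 then ((1 + x.1.1.length : K))⁻¹ else 0) := by
  have hp0 : 0 < p := by omega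
  have hinv : ∀ n : ℕ, (1 + (n:K)) ≠ 0 := by
    intro n
    have := one_add_cast_ne (K := K) 0 n
    simpa using this
  refine ⟨?_, ?_, ?_, ?_, ?_⟩
  · rw [IsRecMatrix, recClosure_diagA_eq p K hp0]
    exact FiniteDimensional.span_of_finite K (Set.finite_range _)
  · rw [recClosure_diagA_eq p K hp0, spanAD, finrank_span_eq_card (li_AD p K hp0)]
    simp
  · rw [diagA_eq,
      show (fun x : EqPair p p => if x.1.1 = x.1.2 then ((1 + x.1.1.length : K))⁻¹ else 0) =
        diagF p K (fun n => (1 + (n:K))⁻¹) from rfl, diagF_mul, deltaFun_eq]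
    have : (fun n : ℕ => (1 + (n:K)) * (1 + (n:K))⁻¹) = fun _ : ℕ => (1:K) := by
      funext n; exact mul_inv_cancel₀ (hinv n)
    rw [this]
  · rw [diagA_eq,
      show (fun x : EqPair p p => if x.1.1 = x.1.2 then ((1 + x.1.1.length : K))⁻¹ else 0) =
        diagF p K (fun n => (1 + (n:K))⁻¹) from rfl, diagF_mul, deltaFun_eq]
    have : (fun n : ℕ => (1 + (n:K))⁻¹ * (1 + (n:K))) = fun _ : ℕ => (1:K) := by
      funext n; exact inv_mul_cancel₀ (hinv n)
    rw [this]
  · intro hFD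
    rw [IsRecMatrix] at hFD
    have li' : LinearIndependent K (fun k : ℕ =>
        (⟨diagB p K k, diagB_mem p K hp0 k⟩ : recClosure p p K
          (fun x : EqPair p p => if x.1.1 = x.1.2 then ((1 + x.1.1.length : K))⁻¹ else 0))) := by
      refine LinearIndependent.of_comp (Submodule.subtype _) ?_
      exact li_diagB p K hp0
    haveI := li'.finite
    exact not_finite ℕ
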